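/- Let L be a real symmetric n×n matrix and for k = 0,…,K let W_k be real d×d matrices with W_kᵀ = −W_k, and set J = Σ_{k=0}^K (W_kᵀ ⊗ T_k(L)), the graph-wise Jacobian of the ChebNet ODE dX/dt = Σ_{k=0}^K T_k(L)·X·W_k. Then for every t ∈ ℝ the matrix exponential exp(t·J) is orthogonal, i.e., (exp(t·J))ᵀ · exp(t·J) = I, and consequently the solution v(t) = exp(t·J)·v₀ of the vectorized ODE v' = J v satisfies ‖v(t)‖ = ‖v₀‖ for all t: the dynamics is non-dissipative and information neither grows nor decays. -/

import Mathlib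

open Matrix
open scoped Kronecker

lemma aeval_transpose {n : ℕ} (L : Matrix (Fin n) (Fin n) ℝ) (p : Polynomial ℝ) :
    (Polynomial.aeval L p)ᵀ = Polynomial.aeval Lᵀ p := by
  induction p using Polynomial.induction_on' with
  | add p q hp hq => simp [hp, hq]
  | monomial k a =>
      simp [Polynomial.aeval_monomial, Matrix.transpose_mul, Matrix.transpose_pow,
        Algebra.algebraMap_eq_smul_one, Matrix.transpose_smul, Matrix.transpose_one,
        smul_mul_assoc, mul_smul_comm]

lemma orth_norm {m : Type*} [Fintype m] [DecidableEq m]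
    (A : Matrix m m ℝ) (hA : Aᵀ * A = 1) (v : EuclideanSpace ℝ m) :
    ‖Matrix.toEuclideanCLM (𝕜 := ℝ) A v‖ = ‖v‖ := by
  have hstar : star A * A = 1 := by
    rwa [Matrix.star_eq_conjTranspose, Matrix.conjTranspose_eq_transpose_of_trivial]
  set f := Matrix.toEuclideanCLM (𝕜 := ℝ) A with hf
  have hsf : star f * f = 1 := by
    rw [hf, ← map_star, ← _root_.map_mul, hstar, _root_.map_one]
  have key : ‖f v‖ ^ 2 = ‖v‖ ^ 2 := by
    rw [← real_inner_self_eq_norm_sq, ← real_inner_self_eq_norm_sq]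
    calc inner ℝ (f v) (f v) = inner ℝ ((ContinuousLinearMap.adjoint f) (f v)) v := by
          rw [ContinuousLinearMap.adjoint_inner_left]
      _ = inner ℝ (((star f) * f) v) v := by rw [ContinuousLinearMap.star_eq_adjoint]; rfl
      _ = (inner ℝ v v : ℝ) := by rw [hsf]; rfl
  nlinarith [norm_nonneg (f v), norm_nonneg v, key]

/-- Evaluation of the `k`-th Chebyshev polynomial of the first kind at a square matrix. -/
noncomputable def chebAt {n : ℕ} (L : Matrix (Fin n) (Fin n) ℝ) (k : ℕ) :
    Matrix (Fin n) (Fin n) ℝ :=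
  Polynomial.aeval L (Polynomial.Chebyshev.T ℝ k)

/-- **Non-dissipative dynamics of the ChebNet ODE.**
If `L` is symmetric and every `W_k` is antisymmetric, then for
`J = ∑_{k=0}^K W_kᵀ ⊗ T_k(L)` the graph-wise Jacobian, the matrix exponential `exp (t J)` is orthogonal for
every `t`, and the flow `v(t) = exp (t J) v₀` preserves the Euclidean norm. -/
theorem chebnet_ode_flow_orthogonal (n d K : ℕ)
    (L : Matrix (Fin n) (Fin n) ℝ) (hL : Lᵀ = L)
    (W : ℕ → Matrix (Fin d) (Fin d) ℝ) (hW : ∀ k ≤ K, (W k)ᵀ = -W k)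
    (J : Matrix (Fin d × Fin n) (Fin d × Fin n) ℝ)
    (hJ : J = ∑ k ∈ Finset.range (K + 1), (W k)ᵀ ⊗ₖ chebAt L k) :
    ∀ t : ℝ,
      (NormedSpace.exp (t • J))ᵀ * NormedSpace.exp (t • J) = 1 ∧
      ∀ v₀ : EuclideanSpace ℝ (Fin d × Fin n),
        ‖Matrix.toEuclideanCLM (𝕜 := ℝ) (NormedSpace.exp (t • J)) v₀‖ = ‖v₀‖ := by
  have hJT : Jᵀ = -J := by
    rw [hJ, Matrix.transpose_sum, ← Finset.sum_neg_distrib]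
    refine Finset.sum_congr rfl fun k hk => ?_
    have hWk := hW k (Nat.lt_succ_iff.mp (Finset.mem_range.mp hk))
    have hC : (chebAt L k)ᵀ = chebAt L k := by
      rw [chebAt, aeval_transpose, hL]
    ext i j
    have h1 : W k i.1 j.1 = -(W k j.1 i.1) := by
      have := congrFun (congrFun hWk j.1) i.1
      simpa [Matrix.transpose_apply] using this
    have h2 : chebAt L k j.2 i.2 = chebAt L k i.2 j.2 := by
      have := congrFun (congrFun hC j.2) i.2
      simpa [Matrix.transpose_apply] using this.symm
    simp only [Matrix.transpose_apply, Matrix.kroneckerMap_apply, Matrix.neg_apply]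
    rw [h1, h2]
    ring
  intro t
  have horth : (NormedSpace.exp (t • J))ᵀ * NormedSpace.exp (t • J) = 1 := by
    have h1 : (t • J)ᵀ = -(t • J) := by rw [Matrix.transpose_smul, hJT, smul_neg]
    rw [← Matrix.exp_transpose, h1,
      ← Matrix.exp_add_of_commute _ _ ((Commute.refl (t • J)).neg_left),
      neg_add_cancel, NormedSpace.exp_zero]
  exact ⟨horth, fun v₀ => orth_norm _ horth v₀⟩
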